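/- Let A, B ∈ ℂ^{n×n}, let ξ_1,…,ξ_{k−1} ∈ ℂ with each A − ξ_iB invertible, and let ϱ̂ ∈ ℂ be different from every ξ_i with A − ϱ̂B invertible. Then for any ϱ̌ ≠ ϱ̂ and any nonzero v ∈ ℂ^n, the rational Krylov subspace satisfies K_k^rat(A, B, v, (ξ_1,…,ξ_{k−1})) = (∏_{i=1}^{k−1} M(ϱ̂, ξ_i)) · K_k(M(ϱ̌, ϱ̂), v), where K_k(C, v) = span{v, Cv, …, C^{k−1}v} is the standard Krylov subspace; i.e., a rational Krylov subspace is the image under a rational matrix function of an ordinary Krylov subspace. -/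

import Mathlib

open Matrix

/-- The elementary rational function M(ϱ,ξ) = (A − ϱB)(A − ξB)⁻¹. -/
noncomputable def Mfun {n : ℕ} (A B : Matrix (Fin n) (Fin n) ℂ) (ϱ ξ : ℂ) :
    Matrix (Fin n) (Fin n) ℂ :=
  (A - ϱ • B) * (A - ξ • B)⁻¹

/-- The ordered product ∏_{i=1}^{j} M(ϱᵢ, ξᵢ) of elementary rational functions. -/
noncomputable def prodM {n : ℕ} (A B : Matrix (Fin n) (Fin n) ℂ) (ϱ ξ : ℕ → ℂ)
    (j : ℕ) : Matrix (Fin n) (Fin n) ℂ :=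
  ((List.range j).map fun i => Mfun A B (ϱ i) (ξ i)).prod

open Polynomial


lemma one_add_CX_eq (d : ℂ) : (1 + C d * X) = C d * X + C 1 := by ring_nf; simp [add_comm]

lemma coeff_pow_linear (d : ℂ) (hd : d ≠ 0) (m : ℕ) :
    coeff ((1 + C d * X) ^ m) m = d ^ m := by
  have h1 : natDegree (1 + C d * X) = 1 := by
    rw [one_add_CX_eq]; exact natDegree_linear hd
  have h2 : leadingCoeff (1 + C d * X) = d := by
    rw [one_add_CX_eq]; exact leadingCoeff_linear hd
  have h3 : natDegree ((1 + C d * X) ^ m) = m := by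
    rw [natDegree_pow, h1, mul_one]
  have := coeff_natDegree (p := (1 + C d * X) ^ m)
  rw [h3, leadingCoeff_pow, h2] at this
  exact this

lemma degree_pow_linear_le (d : ℂ) (m : ℕ) :
    degree ((1 + C d * X) ^ m) ≤ (m : ℕ) := by
  calc degree ((1 + C d * X) ^ m) ≤ m • degree (1 + C d * X) := degree_pow_le _ _
    _ ≤ m • 1 := nsmul_le_nsmul_right (by
        rw [one_add_CX_eq]; exact degree_linear_le) m
    _ = (m : ℕ) := by simp

-- P1: powers of (1 + d X) span degreeLT k
lemma span_pow_linear (d : ℂ) (hd : d ≠ 0) (k : ℕ) :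
    Submodule.span ℂ (Set.range fun j : Fin k => (1 + C d * X) ^ (j : ℕ)) =
      degreeLT ℂ k := by
  apply le_antisymm
  · rw [Submodule.span_le]
    rintro _ ⟨j, rfl⟩
    rw [SetLike.mem_coe, mem_degreeLT]
    exact lt_of_le_of_lt (degree_pow_linear_le d j) (by exact_mod_cast j.2)
  · intro p hp
    rw [mem_degreeLT] at hp
    have key : ∀ j : ℕ, j < k → ∀ q : ℂ[X], degree q ≤ j →
        q ∈ Submodule.span ℂ (Set.range fun j : Fin k => (1 + C d * X) ^ (j : ℕ)) := by
      intro j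
      induction j with
      | zero =>
        intro hk q hq
        have hqC : q = C (q.coeff 0) := eq_C_of_degree_le_zero (by exact_mod_cast hq)
        have h1 : ((1 + C d * X) ^ ((⟨0, hk⟩ : Fin k) : ℕ)) ∈
            Submodule.span ℂ (Set.range fun j : Fin k => (1 + C d * X) ^ (j : ℕ)) :=
          Submodule.subset_span ⟨_, rfl⟩
        have : C (q.coeff 0) = q.coeff 0 • ((1 + C d * X) ^ ((⟨0, hk⟩ : Fin k) : ℕ)) := by
          simp [smul_eq_C_mul]
        rw [hqC, this]
        exact Submodule.smul_mem _ _ h1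
      | succ j ih =>
        intro hk q hq
        set c : ℂ := q.coeff (j + 1) / d ^ (j + 1) with hc
        set t : ℂ[X] := q - c • (1 + C d * X) ^ (j + 1) with ht
        have htd : degree t ≤ j := by
          rw [degree_le_iff_coeff_zero]
          intro m hm
          rcases eq_or_lt_of_le (Nat.succ_le_of_lt (by exact_mod_cast hm : (j : ℕ) < m)) with he | hlt
          · rw [ht]
            simp only [coeff_sub, coeff_smul, ← he]
            rw [coeff_pow_linear d hd, hc, smul_eq_mul, div_mul_cancel₀]
            · ring
            · exact pow_ne_zero _ hd
          · rw [ht]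
            simp only [coeff_sub, coeff_smul]
            have h1 : q.coeff m = 0 := coeff_eq_zero_of_degree_lt
              (lt_of_le_of_lt hq (by exact_mod_cast hlt))
            have h2 : ((1 + C d * X) ^ (j+1)).coeff m = 0 := coeff_eq_zero_of_degree_lt
              (lt_of_le_of_lt (degree_pow_linear_le d (j+1)) (by exact_mod_cast hlt))
            rw [h1, h2, smul_zero, sub_zero]
        have hmem : (1 + C d * X) ^ (j + 1) ∈
            Submodule.span ℂ (Set.range fun j : Fin k => (1 + C d * X) ^ (j : ℕ)) :=
          Submodule.subset_span ⟨⟨j+1, hk⟩, rfl⟩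
        have := ih (Nat.lt_of_succ_lt hk) t htd
        have hq' : q = t + c • (1 + C d * X) ^ (j + 1) := by rw [ht]; ring
        rw [hq']
        exact Submodule.add_mem _ this (Submodule.smul_mem _ _ hmem)
    rcases eq_or_ne p 0 with rfl | hp0
    · exact Submodule.zero_mem _
    · exact key p.natDegree ((natDegree_lt_iff_degree_lt hp0).mpr hp) p degree_le_natDegree

lemma natDegree_prod_linear_le (s : Finset ℕ) (g : ℕ → ℂ[X]) (hg : ∀ i, (g i).natDegree ≤ 1) :
    (∏ i ∈ s, g i).natDegree ≤ s.card := by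
  calc (∏ i ∈ s, g i).natDegree ≤ ∑ i ∈ s, (g i).natDegree := natDegree_prod_le _ _
    _ ≤ ∑ _i ∈ s, 1 := Finset.sum_le_sum fun i _ => hg i
    _ = s.card := by simp

lemma natDegree_one_sub_le (b : ℂ) : (1 - C b * X).natDegree ≤ 1 := by
  have : (1 : ℂ[X]) - C b * X = C (-b) * X + C 1 := by
    simp [C_neg]; ring
  rw [this]; exact natDegree_linear_le

lemma natDegree_one_add_le (b : ℂ) : (1 + C b * X).natDegree ≤ 1 := by
  have : (1 : ℂ[X]) + C b * X = C b * X + C 1 := by ring_nf; simp [add_comm]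
  rw [this]; exact natDegree_linear_le

lemma span_rat_polys (m : ℕ) (e a : ℕ → ℂ)
    (he : ∀ i, i < m → e i ≠ 0)
    (hae : ∀ i j, i < m → j < m → 1 + a i * (e j)⁻¹ ≠ 0) :
    Submodule.span ℂ (Set.range fun j : Fin (m+1) =>
        (∏ i ∈ Finset.Ico (j : ℕ) m, (1 - C (e i) * X)) *
          (∏ i ∈ Finset.range (j : ℕ), (1 + C (a i) * X))) =
      degreeLT ℂ (m+1) := by
  set q : Fin (m+1) → ℂ[X] := fun j =>
    (∏ i ∈ Finset.Ico (j : ℕ) m, (1 - C (e i) * X)) *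
      (∏ i ∈ Finset.range (j : ℕ), (1 + C (a i) * X)) with hq
  apply le_antisymm
  · rw [Submodule.span_le]
    rintro _ ⟨j, rfl⟩
    rw [SetLike.mem_coe, mem_degreeLT]
    have h1 : (q j).natDegree ≤ m := by
      calc (q j).natDegree ≤ _ + _ := natDegree_mul_le
        _ ≤ (Finset.Ico (j : ℕ) m).card + (Finset.range (j : ℕ)).card := by
            gcongr
            · exact natDegree_prod_linear_le _ _ fun i => natDegree_one_sub_le _
            · exact natDegree_prod_linear_le _ _ fun i => natDegree_one_add_le _
        _ ≤ (m - j) + j := by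
            rw [Nat.card_Ico, Finset.card_range]
        _ ≤ m := by omega
    calc (q j).degree ≤ ((q j).natDegree : WithBot ℕ) := degree_le_natDegree
      _ < ((m + 1 : ℕ) : WithBot ℕ) := by exact_mod_cast Nat.lt_succ_of_le h1
  · have key : ∀ j, j ≤ m → ∀ p : ℂ[X], p.degree ≤ (j : ℕ) →
        (∏ i ∈ Finset.Ico j m, (1 - C (e i) * X)) * p ∈
          Submodule.span ℂ (Set.range q) := by
      intro j
      induction j with
      | zero =>
        intro _ p hp
        have hpC : p = C (p.coeff 0) := eq_C_of_degree_le_zero (by exact_mod_cast hp)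
        have hq0 : q (0 : Fin (m+1)) = ∏ i ∈ Finset.Ico 0 m, (1 - C (e i) * X) := by
          simp [hq]
        have : (∏ i ∈ Finset.Ico 0 m, (1 - C (e i) * X)) * p = p.coeff 0 • q (0 : Fin (m+1)) := by
          rw [hq0, smul_eq_C_mul]
          nth_rewrite 1 [hpC]
          ring
        rw [this]
        exact Submodule.smul_mem _ _ (Submodule.subset_span ⟨_, rfl⟩)
      | succ j ih =>
        intro hjm p hp
        have hjm' : j < m := hjm
        set r : ℂ := (e j)⁻¹ with hr
        set s : ℂ[X] := ∏ i ∈ Finset.range (j+1), (1 + C (a i) * X) with hs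
        have hse : s.eval r ≠ 0 := by
          rw [hs, eval_prod]
          rw [Finset.prod_ne_zero_iff]
          intro i hi
          simp only [eval_add, eval_one, eval_mul, eval_C, eval_X]
          exact hae i j (lt_of_lt_of_le (Finset.mem_range.mp hi) hjm) hjm'
        set c : ℂ := p.eval r / s.eval r with hc
        set t : ℂ[X] := p - C c * s with ht
        have ht0 : t.IsRoot r := by
          rw [IsRoot, ht, eval_sub, eval_mul, eval_C, hc, div_mul_cancel₀ _ hse, sub_self]
        obtain ⟨g, hg⟩ := (dvd_iff_isRoot).mpr ht0
        have hsd : s.natDegree ≤ j + 1 := by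
          rw [hs]
          calc s.natDegree ≤ (Finset.range (j+1)).card :=
            natDegree_prod_linear_le _ _ fun i => natDegree_one_add_le _
            _ = j + 1 := Finset.card_range _
        have htd : t.degree ≤ ((j + 1 : ℕ) : WithBot ℕ) := by
          rw [ht]
          apply le_trans (degree_sub_le _ _)
          apply max_le hp
          calc degree (C c * s) ≤ degree (C c) + degree s := degree_mul_le _ _
            _ ≤ 0 + degree s := add_le_add degree_C_le le_rfl
            _ = degree s := zero_add _
            _ ≤ (s.natDegree : WithBot ℕ) := degree_le_natDegree
            _ ≤ ((j + 1 : ℕ) : WithBot ℕ) := by exact_mod_cast hsd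
        have hgd : g.degree ≤ (j : ℕ) := by
          rcases eq_or_ne g 0 with rfl | hg0
          · simp
          · have : t.degree = 1 + g.degree := by
              rw [hg, degree_mul, degree_X_sub_C]
            rw [this] at htd
            rw [degree_eq_natDegree hg0] at htd ⊢
            rw [← Nat.cast_one, ← Nat.cast_add, Nat.cast_le] at htd
            have : g.natDegree ≤ j := by omega
            exact_mod_cast this
        have hre : -r * e j = -1 := by
          rw [hr, neg_mul, inv_mul_cancel₀ (he j hjm')]
        have hXC : X - C r = (-r) • (1 - C (e j) * X) := by
          rw [smul_sub, smul_eq_C_mul, smul_eq_C_mul, mul_one, ← mul_assoc, ← C_mul, hre]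
          simp only [C_neg, C_1]
          ring
        have hp' : p = (X - C r) * g + C c * s := by
          have : p - C c * s = (X - C r) * g := hg
          linear_combination this
        have hsplit : (∏ i ∈ Finset.Ico j m, (1 - C (e i) * X)) =
            (1 - C (e j) * X) * ∏ i ∈ Finset.Ico (j+1) m, (1 - C (e i) * X) :=
          Finset.prod_eq_prod_Ico_succ_bot hjm' _
        have hqj1 : q (⟨j+1, Nat.succ_lt_succ hjm⟩ : Fin (m+1)) =
            (∏ i ∈ Finset.Ico (j+1) m, (1 - C (e i) * X)) * s := by
          rw [hq, hs]
        have goal_eq : (∏ i ∈ Finset.Ico (j+1) m, (1 - C (e i) * X)) * p =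
            (-r) • ((∏ i ∈ Finset.Ico j m, (1 - C (e i) * X)) * g) +
              c • q (⟨j+1, Nat.succ_lt_succ hjm⟩ : Fin (m+1)) := by
          rw [hp', hXC, hqj1, hsplit]
          simp only [smul_eq_C_mul, C_neg]
          ring
        rw [goal_eq]
        exact Submodule.add_mem _
          (Submodule.smul_mem _ _ (ih (le_of_lt hjm) g hgd))
          (Submodule.smul_mem _ _ (Submodule.subset_span ⟨_, rfl⟩))
    intro p hp
    rw [mem_degreeLT] at hp
    rcases eq_or_ne p 0 with rfl | hp0
    · exact Submodule.zero_mem _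
    · have h1 : p.degree ≤ (m : ℕ) := by
        rw [degree_eq_natDegree hp0] at hp ⊢
        exact_mod_cast Nat.lt_succ_iff.mp (by exact_mod_cast hp)
      have := key m le_rfl p h1
      simpa using this
section MatLemmas

variable {n : ℕ} (A B : Matrix (Fin n) (Fin n) ℂ)

lemma commute_aeval {R : Type*} [CommRing R] {S : Type*} [Ring S] [Algebra R S]
    {M N : S} (h : Commute M N) (p : R[X]) : Commute M (aeval N p) := by
  induction p using Polynomial.induction_on' with
  | add p q hp hq => rw [map_add]; exact hp.add_right hq
  | monomial k a =>
    rw [aeval_monomial]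
    have h1 : Commute M ((algebraMap R S) a) := (Algebra.commutes a M).symm
    exact h1.mul_right (h.pow_right k)

lemma prodM_succ (ϱ ξ : ℕ → ℂ) (j : ℕ) :
    prodM A B ϱ ξ (j + 1) = prodM A B ϱ ξ j * Mfun A B (ϱ j) (ξ j) := by
  rw [prodM, List.range_succ, List.map_append, List.prod_append, prodM]
  simp

lemma prodM_zero (ϱ ξ : ℕ → ℂ) : prodM A B ϱ ξ 0 = 1 := by simp [prodM]

-- resolvent symmetry
lemma resolvent_comm {β δ : ℂ} (hβ : IsUnit (A - β • B)) (hδ : IsUnit (A - δ • B)) :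
    (A - β • B)⁻¹ * B * (A - δ • B)⁻¹ = (A - δ • B)⁻¹ * B * (A - β • B)⁻¹ := by
  rcases eq_or_ne β δ with rfl | hne
  · rfl
  · set X := A - β • B
    set Y := A - δ • B
    have hXd : IsUnit X.det := (Matrix.isUnit_iff_isUnit_det _).mp hβ
    have hYd : IsUnit Y.det := (Matrix.isUnit_iff_isUnit_det _).mp hδ
    have e1 : X⁻¹ * (Y - X) * Y⁻¹ = X⁻¹ - Y⁻¹ := by
      rw [mul_sub, sub_mul, mul_assoc, Matrix.mul_nonsing_inv _ hYd, mul_one,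
        Matrix.nonsing_inv_mul _ hXd, one_mul]
    have e2 : Y⁻¹ * (Y - X) * X⁻¹ = X⁻¹ - Y⁻¹ := by
      rw [mul_sub, sub_mul, Matrix.nonsing_inv_mul _ hYd, one_mul, mul_assoc,
        Matrix.mul_nonsing_inv _ hXd, mul_one]
    have hYX : Y - X = (β - δ) • B := by
      simp only [X, Y, sub_smul]
      abel
    rw [hYX] at e1 e2
    have e3 : (β - δ) • (X⁻¹ * B * Y⁻¹) = (β - δ) • (Y⁻¹ * B * X⁻¹) := by
      rw [← smul_mul_assoc, ← mul_smul_comm, e1, ← smul_mul_assoc, ← mul_smul_comm, e2]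
    exact smul_right_injective _ (sub_ne_zero.mpr hne) e3

lemma N_comm {β δ : ℂ} (hβ : IsUnit (A - β • B)) (hδ : IsUnit (A - δ • B)) :
    Commute (B * (A - β • B)⁻¹) (B * (A - δ • B)⁻¹) := by
  unfold Commute SemiconjBy
  calc B * (A - β • B)⁻¹ * (B * (A - δ • B)⁻¹)
      = B * ((A - β • B)⁻¹ * B * (A - δ • B)⁻¹) := by noncomm_ring
    _ = B * ((A - δ • B)⁻¹ * B * (A - β • B)⁻¹) := by rw [resolvent_comm A B hβ hδ]
    _ = B * (A - δ • B)⁻¹ * (B * (A - β • B)⁻¹) := by noncomm_ring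

lemma Mfun_eq {ϱ ξ : ℂ} (hξ : IsUnit (A - ξ • B)) :
    Mfun A B ϱ ξ = 1 + (ξ - ϱ) • (B * (A - ξ • B)⁻¹) := by
  have h1 : A - ϱ • B = (A - ξ • B) + (ξ - ϱ) • B := by
    rw [sub_smul]; abel
  rw [Mfun, h1, add_mul, Matrix.mul_nonsing_inv _ ((Matrix.isUnit_iff_isUnit_det _).mp hξ),
    smul_mul_assoc]

lemma Mfun_mul_inv {ϱ ξ : ℂ} (hξ : IsUnit (A - ξ • B)) (hϱ : IsUnit (A - ϱ • B)) :
    Mfun A B ϱ ξ * Mfun A B ξ ϱ = 1 := by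
  rw [Mfun, Mfun, mul_assoc, ← mul_assoc (A - ξ • B)⁻¹,
    Matrix.nonsing_inv_mul _ ((Matrix.isUnit_iff_isUnit_det _).mp hξ), one_mul,
    Matrix.mul_nonsing_inv _ ((Matrix.isUnit_iff_isUnit_det _).mp hϱ)]

lemma Mfun_comm {ϱ₁ ξ₁ ϱ₂ ξ₂ : ℂ} (h₁ : IsUnit (A - ξ₁ • B)) (h₂ : IsUnit (A - ξ₂ • B)) :
    Commute (Mfun A B ϱ₁ ξ₁) (Mfun A B ϱ₂ ξ₂) := by
  rw [Mfun_eq A B h₁, Mfun_eq A B h₂]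
  have h : Commute ((ξ₁ - ϱ₁) • (B * (A - ξ₁ • B)⁻¹)) ((ξ₂ - ϱ₂) • (B * (A - ξ₂ • B)⁻¹)) :=
    ((N_comm A B h₁ h₂).smul_left (ξ₁ - ϱ₁)).smul_right (ξ₂ - ϱ₂)
  exact (Commute.one_right _).add_right ((Commute.one_left _).add_left h)

end MatLemmas


section Fact

variable {n : ℕ} (A B : Matrix (Fin n) (Fin n) ℂ) (ρhat : ℂ)

local notation "NN" => B * (A - ρhat • B)⁻¹

lemma aeval_one_add_lin (c : ℂ) :
    aeval NN (1 + C c * X) = 1 + c • NN := by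
  simp [Algebra.algebraMap_eq_smul_one, smul_mul_assoc]

lemma Mfun_pole (hρ : IsUnit (A - ρhat • B)) (μ : ℂ) :
    Mfun A B μ ρhat = aeval NN (1 + C (ρhat - μ) * X) := by
  rw [aeval_one_add_lin, Mfun_eq A B hρ]

lemma aeval_one_sub_lin (ξ' : ℂ) (hρ : IsUnit (A - ρhat • B)) :
    aeval NN (1 - C (ξ' - ρhat) * X) = Mfun A B ξ' ρhat := by
  rw [Mfun_pole A B ρhat hρ]
  congr 1
  rw [C_sub, C_sub]
  ring

lemma Mfun_pole_mul {ξ' : ℂ} (hξ : IsUnit (A - ξ' • B)) (hρ : IsUnit (A - ρhat • B)) :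
    Mfun A B ρhat ξ' * aeval NN (1 - C (ξ' - ρhat) * X) = 1 := by
  rw [aeval_one_sub_lin A B ρhat ξ' hρ]
  exact Mfun_mul_inv A B hξ hρ

lemma Mfun_factor {ξ' : ℂ} (hξ : IsUnit (A - ξ' • B)) (hρ : IsUnit (A - ρhat • B)) (μ : ℂ) :
    Mfun A B μ ξ' = Mfun A B ρhat ξ' * aeval NN (1 + C (ρhat - μ) * X) := by
  rw [← Mfun_pole A B ρhat hρ μ, (Mfun_comm A B hξ hρ).eq]
  simp only [Mfun]
  rw [mul_assoc, ← mul_assoc (A - ρhat • B)⁻¹ (A - ρhat • B),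
    Matrix.nonsing_inv_mul _ ((Matrix.isUnit_iff_isUnit_det _).mp hρ), one_mul]

lemma commute_N_Mfun {ξ' : ℂ} (hξ : IsUnit (A - ξ' • B)) (hρ : IsUnit (A - ρhat • B)) :
    Commute (Mfun A B ρhat ξ') NN := by
  rw [Mfun_eq A B hξ]
  exact ((Commute.one_left _).add_left (((N_comm A B hξ hρ)).smul_left _))

lemma mul_shuffle {R : Type*} [Ring R] (P S M L : R) (h : S * M = M * S) :
    P * S * (M * L) = P * M * (S * L) := by
  rw [mul_assoc P S, ← mul_assoc S M L, h, mul_assoc M S L, ← mul_assoc P M]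

lemma prod_factor (ϱ ξ : ℕ → ℂ) (k : ℕ) (hξ : ∀ i, i < k → IsUnit (A - ξ i • B))
    (hρ : IsUnit (A - ρhat • B)) :
    ∀ j, j ≤ k → prodM A B ϱ ξ j = prodM A B (fun _ => ρhat) ξ j *
      aeval NN (∏ i ∈ Finset.range j, (1 + C (ρhat - ϱ i) * X)) := by
  intro j
  induction j with
  | zero => intro _; simp [prodM_zero]
  | succ j ih =>
    intro hjk
    have hj : j < k := hjk
    rw [prodM_succ, ih (le_of_lt hj), Mfun_factor A B ρhat (hξ j hj) hρ (ϱ j),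
      prodM_succ, Finset.prod_range_succ, _root_.map_mul]
    exact mul_shuffle _ _ _ _ ((commute_aeval (commute_N_Mfun A B ρhat (hξ j hj) hρ) _).symm.eq)

lemma prod_pole_factor (ξ : ℕ → ℂ) (k : ℕ) (hξ : ∀ i, i < k → IsUnit (A - ξ i • B))
    (hρ : IsUnit (A - ρhat • B)) :
    ∀ t, t ≤ k → prodM A B (fun _ => ρhat) ξ k *
        aeval NN (∏ i ∈ Finset.Ico (k - t) k, (1 - C (ξ i - ρhat) * X)) =
      prodM A B (fun _ => ρhat) ξ (k - t) := by
  intro t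
  induction t with
  | zero => intro _; simp
  | succ t ih =>
    intro htk
    have hjk : k - (t+1) < k := by omega
    have hsucc : k - (t+1) + 1 = k - t := by omega
    rw [Finset.prod_eq_prod_Ico_succ_bot hjk, mul_comm ((1 : Polynomial ℂ) - _) _,
      _root_.map_mul, ← mul_assoc, hsucc, ih (by omega), ← hsucc, prodM_succ, mul_assoc,
      Mfun_pole_mul A B ρhat (hξ _ hjk) hρ, mul_one]

lemma prod_combined (ϱ ξ : ℕ → ℂ) (k : ℕ) (hξ : ∀ i, i < k → IsUnit (A - ξ i • B))
    (hρ : IsUnit (A - ρhat • B)) (j : ℕ) (hjk : j ≤ k) :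
    prodM A B ϱ ξ j = prodM A B (fun _ => ρhat) ξ k *
      aeval NN ((∏ i ∈ Finset.Ico j k, (1 - C (ξ i - ρhat) * X)) *
        (∏ i ∈ Finset.range j, (1 + C (ρhat - ϱ i) * X))) := by
  have h1 := prod_pole_factor A B ρhat ξ k hξ hρ (k - j) (by omega)
  rw [show k - (k - j) = j by omega] at h1
  rw [prod_factor A B ρhat ϱ ξ k hξ hρ j hjk, ← h1, _root_.map_mul, mul_assoc]

lemma Mfun_pow (ρchk : ℂ) (hρ : IsUnit (A - ρhat • B)) (j : ℕ) :
    Mfun A B ρchk ρhat ^ j = aeval NN ((1 + C (ρhat - ρchk) * X) ^ j) := by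
  rw [map_pow, ← Mfun_pole A B ρhat hρ]

end Fact

noncomputable def aevalMulVec {n : ℕ} (N : Matrix (Fin n) (Fin n) ℂ) (v : Fin n → ℂ) :
    Polynomial ℂ →ₗ[ℂ] (Fin n → ℂ) where
  toFun p := (aeval N p).mulVec v
  map_add' p q := by simp [map_add, Matrix.add_mulVec]
  map_smul' c p := by simp [_root_.map_smul, Matrix.smul_mulVec]

lemma span_range_map {ι M₁ M₂ : Type*} [AddCommMonoid M₁] [AddCommMonoid M₂]
    [Module ℂ M₁] [Module ℂ M₂] (T : M₁ →ₗ[ℂ] M₂) (f : ι → M₁) :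
    Submodule.span ℂ (Set.range fun j => T (f j)) =
      Submodule.map T (Submodule.span ℂ (Set.range f)) := by
  rw [Submodule.map_span, ← Set.range_comp]; rfl

/-- A rational Krylov subspace is the image, under the rational matrix function
∏ M(ρhat,ξᵢ), of the ordinary Krylov subspace generated by M(ρchk,ρhat). -/
theorem rational_krylov_as_image_of_krylov {n : ℕ}
    (A B : Matrix (Fin n) (Fin n) ℂ) (k : ℕ)
    (ξ : ℕ → ℂ) (hξ : ∀ i, i < k - 1 → IsUnit (A - ξ i • B))
    (ϱ : ℕ → ℂ) (hϱ : ∀ i j, i < k - 1 → j < k - 1 → ϱ i ≠ ξ j)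
    (ρhat : ℂ) (hρhat : ∀ j, j < k - 1 → ρhat ≠ ξ j) (hρhatu : IsUnit (A - ρhat • B))
    (ρchk : ℂ) (hρchk : ρchk ≠ ρhat)
    (v : Fin n → ℂ) (hv : v ≠ 0) :
    Submodule.span ℂ (Set.range fun j : Fin k => (prodM A B ϱ ξ (j : ℕ)).mulVec v) =
      Submodule.map (prodM A B (fun _ => ρhat) ξ (k - 1)).mulVecLin
        (Submodule.span ℂ
          (Set.range fun j : Fin k => ((Mfun A B ρchk ρhat) ^ (j : ℕ)).mulVec v)) := by
  rcases k with _ | m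
  · simp [Set.range_eq_empty, Submodule.map_bot]
  · simp only [Nat.add_sub_cancel] at hξ hϱ hρhat ⊢
    set N : Matrix (Fin n) (Fin n) ℂ := B * (A - ρhat • B)⁻¹ with hN
    set L : Polynomial ℂ →ₗ[ℂ] (Fin n → ℂ) := aevalMulVec N v with hL
    set P : Matrix (Fin n) (Fin n) ℂ := prodM A B (fun _ => ρhat) ξ m with hP
    -- generators of the left span
    have hgenL : (fun j : Fin (m+1) => (prodM A B ϱ ξ (j : ℕ)).mulVec v) =
        fun j : Fin (m+1) => P.mulVecLin (L
          ((∏ i ∈ Finset.Ico (j : ℕ) m, (1 - C (ξ i - ρhat) * X)) *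
            (∏ i ∈ Finset.range (j : ℕ), (1 + C (ρhat - ϱ i) * X)))) := by
      funext j
      rw [prod_combined A B ρhat ϱ ξ m hξ hρhatu (j : ℕ) (Nat.lt_succ_iff.mp j.2)]
      simp only [hL, hP, aevalMulVec, LinearMap.coe_mk, AddHom.coe_mk,
        Matrix.mulVecLin_apply, Matrix.mulVec_mulVec, hN]
    have hgenR : (fun j : Fin (m+1) => ((Mfun A B ρchk ρhat) ^ (j : ℕ)).mulVec v) =
        fun j : Fin (m+1) => L ((1 + C (ρhat - ρchk) * X) ^ (j : ℕ)) := by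
      funext j
      rw [Mfun_pow A B ρhat ρchk hρhatu]
      simp only [hL, aevalMulVec, LinearMap.coe_mk, AddHom.coe_mk, hN]
    rw [hgenL, hgenR]
    have he : ∀ i, i < m → ξ i - ρhat ≠ 0 := fun i hi =>
      sub_ne_zero.mpr (Ne.symm (hρhat i hi))
    have hae : ∀ i j, i < m → j < m → 1 + (ρhat - ϱ i) * (ξ j - ρhat)⁻¹ ≠ 0 := by
      intro i j hi hj h
      apply hϱ i j hi hj
      have hej := he j hj
      field_simp at h
      linear_combination -h
    have hd : ρhat - ρchk ≠ 0 := sub_ne_zero.mpr (Ne.symm hρchk)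
    calc Submodule.span ℂ (Set.range fun j : Fin (m+1) => P.mulVecLin (L
            ((∏ i ∈ Finset.Ico (j : ℕ) m, (1 - C (ξ i - ρhat) * X)) *
              (∏ i ∈ Finset.range (j : ℕ), (1 + C (ρhat - ϱ i) * X)))))
        = Submodule.map P.mulVecLin (Submodule.map L (Submodule.span ℂ
            (Set.range fun j : Fin (m+1) =>
              (∏ i ∈ Finset.Ico (j : ℕ) m, (1 - C (ξ i - ρhat) * X)) *
                (∏ i ∈ Finset.range (j : ℕ), (1 + C (ρhat - ϱ i) * X))))) := by
          rw [span_range_map, span_range_map]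
      _ = Submodule.map P.mulVecLin (Submodule.map L (degreeLT ℂ (m+1))) := by
          rw [span_rat_polys m (fun i => ξ i - ρhat) (fun i => ρhat - ϱ i) he hae]
      _ = Submodule.map P.mulVecLin (Submodule.map L (Submodule.span ℂ
            (Set.range fun j : Fin (m+1) => (1 + C (ρhat - ρchk) * X) ^ (j : ℕ)))) := by
          rw [span_pow_linear (ρhat - ρchk) hd (m+1)]
      _ = Submodule.map P.mulVecLin (Submodule.span ℂ
            (Set.range fun j : Fin (m+1) => L ((1 + C (ρhat - ρchk) * X) ^ (j : ℕ)))) := by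
          rw [span_range_map]
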